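/- Let $K = \mathbb{F}_q$ be a finite field, let $X$ be a finite subset of $\mathbb{A}^s = K^s$, let $I = I(X)$ be its vanishing ideal, and let $\prec$ be a graded monomial order on $S$. Then for the Reed–Muller-type code $C_X(d)$ of degree $d$ and every integer $1 \le r \le H_I^a(d)$ one has $\delta_r(C_X(d)) = \deg(S/I) - \max\{\deg(S/(I,F)) \mid F \in \mathcal{F}_{\prec,d,r}\}$. -/

import Mathlib

open MvPolynomial
open scoped MonomialOrder

variable {K : Type*} [Field K] {s : ℕ}

/-- The exponent of the initial (leading) monomial of `f` with respect to the
monomial order `m` (it is `0` for `f = 0`). -/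
noncomputable def leadExp (m : MonomialOrder (Fin s)) (f : MvPolynomial (Fin s) K) :
    Fin s →₀ ℕ :=
  m.toSyn.symm (f.support.sup fun a => m.toSyn a)

/-- The coefficient of the initial monomial of `f`; `f` is monic when this is `1`. -/
noncomputable def leadCoeff (m : MonomialOrder (Fin s)) (f : MvPolynomial (Fin s) K) : K :=
  f.coeff (leadExp m f)

/-- The initial monomial `in_≺(f)` of `f`, as a (monic) monomial of the polynomial ring. -/
noncomputable def leadMon (m : MonomialOrder (Fin s)) (f : MvPolynomial (Fin s) K) :
    MvPolynomial (Fin s) K :=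
  monomial (leadExp m f) (1 : K)

/-- The initial ideal `in_≺(I)` of an ideal `I`: the ideal generated by the initial
monomials of the nonzero elements of `I`. -/
noncomputable def initialIdeal (m : MonomialOrder (Fin s)) (I : Ideal (MvPolynomial (Fin s) K)) :
    Ideal (MvPolynomial (Fin s) K) :=
  Ideal.span { g | ∃ f ∈ I, f ≠ 0 ∧ g = leadMon m f }

/-- The footprint `Δ_≺(I)` of `S/I`: the set of standard monomials, i.e. the (monic)
monomials that do not belong to the initial ideal of `I`. -/
noncomputable def stdMonomials (m : MonomialOrder (Fin s)) (I : Ideal (MvPolynomial (Fin s) K)) :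
    Set (MvPolynomial (Fin s) K) :=
  { g | (∃ a : Fin s →₀ ℕ, g = monomial a (1 : K)) ∧ g ∉ initialIdeal m I }

/-- `KΔ_≺(I)`, the `K`-linear span of the standard monomials of `S/I`. -/
noncomputable def stdSpan (m : MonomialOrder (Fin s)) (I : Ideal (MvPolynomial (Fin s) K)) :
    Submodule K (MvPolynomial (Fin s) K) :=
  Submodule.span K (stdMonomials m I)

/-- A monomial order is graded if monomials are first compared by their total degrees. -/
def IsGradedOrder (m : MonomialOrder (Fin s)) : Prop :=
  ∀ a b : Fin s →₀ ℕ, a.degree < b.degree → a ≺[m] b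

/-- The vanishing ideal `I(X)` of a set of points `X ⊆ 𝔸^s = K^s`. -/
def affVanishingIdeal (X : Set (Fin s → K)) : Ideal (MvPolynomial (Fin s) K) where
  carrier := { f | ∀ x ∈ X, eval x f = 0 }
  add_mem' := by
    intro a b ha hb x hx
    simp [ha x hx, hb x hx]
  zero_mem' := by intro x hx; simp
  smul_mem' := by
    intro c f hf x hx
    simp [smul_eq_mul, hf x hx]

/-- The evaluation map `S → K^X`, `f ↦ (f(P₁),…,f(P_m))`, at the points of a finite
set `X` of points of `𝔸^s`. -/
noncomputable def evalMap (X : Finset (Fin s → K)) :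
    MvPolynomial (Fin s) K →ₗ[K] (X → K) where
  toFun f := fun x => eval (x : Fin s → K) f
  map_add' f g := by funext x; simp
  map_smul' c f := by funext x; simp [Algebra.smul_def]

/-- The degree `deg(S/I)`.  For the ideals considered in this paper `S/I` is a
zero-dimensional ring, and its degree (the normalized leading coefficient of the
affine Hilbert polynomial) equals `dim_K (S/I)` (and is `0` when `I = S`). -/
noncomputable def adeg (I : Ideal (MvPolynomial (Fin s) K)) : ℕ :=
  Module.finrank K (MvPolynomial (Fin s) K ⧸ I)

/-- The affine Hilbert function `H_I^a(d) = dim_K (S_{≤d}/I_{≤d})`, computed as the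
dimension of the image of `S_{≤d}` in `S/I`. -/
noncomputable def affineHilbert (I : Ideal (MvPolynomial (Fin s) K)) (d : ℕ) : ℕ :=
  Module.finrank K
    ((restrictTotalDegree (Fin s) K d).map (Submodule.restrictScalars K I).mkQ)

/-- The support `χ(D)` of a subcode `D ⊆ K^ι`. -/
def codeSupport {ι : Type*} (D : Submodule K (ι → K)) : Set ι :=
  { i | ∃ v ∈ D, v i ≠ 0 }

/-- The `r`-th generalized Hamming weight of a linear code `C ⊆ K^ι`: the minimum
size of the support of an `r`-dimensional subcode. -/
noncomputable def ghw {ι : Type*} (C : Submodule K (ι → K)) (r : ℕ) : ℕ :=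
  sInf { n | ∃ D : Submodule K (ι → K),
    D ≤ C ∧ Module.finrank K (↥D) = r ∧ (codeSupport D).ncard = n }

/-- The minimum distance of a linear code: the least Hamming weight of a nonzero
codeword. -/
noncomputable def minDist {ι : Type*} (C : Submodule K (ι → K)) : ℕ :=
  sInf { n | ∃ v ∈ C, v ≠ 0 ∧ ({ i : ι | v i ≠ 0 }).ncard = n }

/-- The affine torus `T = (K^*)^s`. -/
noncomputable def torus (K : Type*) [Field K] [Fintype K] (s : ℕ) : Finset (Fin s → K) :=
  letI := Classical.decEq K
  Finset.univ.filter fun x => ∀ i, x i ≠ 0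

/-- `V_d`: the set of squarefree (monic) monomials of degree `d`. -/
def sqfreeMonomials (K : Type*) [Field K] (s d : ℕ) : Set (MvPolynomial (Fin s) K) :=
  { g | ∃ a : Fin s →₀ ℕ, (∀ i, a i ≤ 1) ∧ a.degree = d ∧ g = monomial a (1 : K) }

/-- `V_{≤d}`: the set of squarefree (monic) monomials of degree at most `d`. -/
def sqfreeMonomialsLe (K : Type*) [Field K] (s d : ℕ) : Set (MvPolynomial (Fin s) K) :=
  { g | ∃ a : Fin s →₀ ℕ, (∀ i, a i ≤ 1) ∧ a.degree ≤ d ∧ g = monomial a (1 : K) }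

/-- `𝓕_{≺,d,r}`: the family of `r`-element sets of monic standard polynomials of `S/I`
of degree at most `d` with pairwise distinct initial monomials. -/
def FprecSet (m : MonomialOrder (Fin s)) (I : Ideal (MvPolynomial (Fin s) K)) (d r : ℕ) :
    Set (Finset (MvPolynomial (Fin s) K)) :=
  { F | F.card = r ∧
        (∀ f ∈ F, f ∈ stdSpan m I ∧ f ≠ 0 ∧ leadCoeff m f = 1 ∧ f.totalDegree ≤ d) ∧
        ∀ f ∈ F, ∀ g ∈ F, leadExp m f = leadExp m g → f = g }

section LeadAPI

variable {K : Type*} [Field K] {s : ℕ} (m : MonomialOrder (Fin s))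

lemma leadExp_mem_support {f : MvPolynomial (Fin s) K} (hf : f ≠ 0) :
    leadExp m f ∈ f.support := by
  obtain ⟨a, ha, he⟩ := Finset.exists_mem_eq_sup f.support
    (MvPolynomial.support_nonempty.mpr hf) (fun a => m.toSyn a)
  rw [leadExp, he]
  simpa using ha

lemma leadCoeff_ne_zero {f : MvPolynomial (Fin s) K} (hf : f ≠ 0) :
    leadCoeff m f ≠ 0 :=
  MvPolynomial.mem_support_iff.mp (leadExp_mem_support m hf)

lemma le_leadExp {f : MvPolynomial (Fin s) K} {e : Fin s →₀ ℕ} (he : e ∈ f.support) :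
    m.toSyn e ≤ m.toSyn (leadExp m f) := by
  rw [leadExp, AddEquiv.apply_symm_apply]
  exact Finset.le_sup he

lemma leadExp_le {f : MvPolynomial (Fin s) K} {b : m.syn}
    (h : ∀ e ∈ f.support, m.toSyn e ≤ b) : m.toSyn (leadExp m f) ≤ b := by
  rw [leadExp, AddEquiv.apply_symm_apply]
  exact Finset.sup_le h

lemma coeff_eq_zero_of_leadExp_lt {f : MvPolynomial (Fin s) K} {e : Fin s →₀ ℕ}
    (h : m.toSyn (leadExp m f) < m.toSyn e) : f.coeff e = 0 := by
  by_contra hc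
  exact absurd (le_leadExp m (MvPolynomial.mem_support_iff.mpr hc)) (not_le.mpr h)

lemma degree_le_of_syn_le (hm : IsGradedOrder m) {a b : Fin s →₀ ℕ}
    (h : m.toSyn a ≤ m.toSyn b) : a.degree ≤ b.degree := by
  by_contra hc
  exact absurd (hm b a (not_le.mp hc)) (not_lt.mpr h)

lemma finsupp_degree_eq_sum (e : Fin s →₀ ℕ) : (e.sum fun _ n => n) = e.degree := rfl

lemma totalDegree_eq_degree_leadExp (hm : IsGradedOrder m) {f : MvPolynomial (Fin s) K}
    (hf : f ≠ 0) : f.totalDegree = (leadExp m f).degree := by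
  apply le_antisymm
  · apply Finset.sup_le
    intro e he
    rw [finsupp_degree_eq_sum]
    exact degree_le_of_syn_le m hm (le_leadExp m he)
  · rw [← finsupp_degree_eq_sum]
    exact MvPolynomial.le_totalDegree (leadExp_mem_support m hf)

end LeadAPI
section CodeSupport

variable {K : Type*} [Field K]

lemma codeSupport_span {ι : Type*} (V : Set (ι → K)) :
    codeSupport (Submodule.span K V) = ⋃ v ∈ V, {i | v i ≠ 0} := by
  ext i
  constructor
  · rintro ⟨w, hw, hwi⟩
    induction hw using Submodule.span_induction with
    | mem v hv => exact Set.mem_biUnion hv hwi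
    | zero => exact absurd rfl hwi
    | add u v _ _ ihu ihv =>
      rcases eq_or_ne (u i) 0 with h | h
      · apply ihv
        simpa [h] using hwi
      · exact ihu h
    | smul c u _ ihu =>
      apply ihu
      intro h
      apply hwi
      show c * u i = 0
      rw [h, mul_zero]
  · intro hi
    simp only [Set.mem_iUnion] at hi
    obtain ⟨v, hv, hvi⟩ := hi
    exact ⟨v, Submodule.subset_span hv, hvi⟩

end CodeSupport
section StdAPI

variable {K : Type*} [Field K] {s : ℕ} (m : MonomialOrder (Fin s))
  (I : Ideal (MvPolynomial (Fin s) K))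

lemma mem_stdSpan_iff {f : MvPolynomial (Fin s) K} :
    f ∈ stdSpan m I ↔ ∀ e ∈ f.support, (monomial e (1 : K)) ∉ initialIdeal m I := by
  constructor
  · intro hf
    induction hf using Submodule.span_induction with
    | mem g hg =>
      obtain ⟨⟨a, rfl⟩, hg2⟩ := hg
      intro e he
      have : e = a := by
        have := MvPolynomial.support_monomial_subset he
        simpa using this
      subst this; exact hg2
    | zero => simp
    | add g h _ _ ihg ihh =>
      intro e he
      rcases Finset.mem_union.mp (MvPolynomial.support_add he) with h' | h'
      · exact ihg e h'
      · exact ihh e h'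
    | smul c g _ ihg =>
      intro e he
      rcases eq_or_ne c 0 with rfl | hc
      · simp at he
      · exact ihg e (by rwa [MvPolynomial.support_smul_eq hc] at he)
  · intro hf
    have : f = ∑ e ∈ f.support, monomial e (f.coeff e) := (MvPolynomial.support_sum_monomial_coeff f).symm
    rw [this]
    apply Submodule.sum_mem
    intro e he
    have : monomial e (f.coeff e) = (f.coeff e) • monomial e (1 : K) := by
      rw [MvPolynomial.smul_monomial, smul_eq_mul, mul_one]
    rw [this]
    exact Submodule.smul_mem _ _ (Submodule.subset_span ⟨⟨e, rfl⟩, hf e he⟩)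

lemma eq_zero_of_mem_stdSpan_inter {f : MvPolynomial (Fin s) K}
    (h1 : f ∈ stdSpan m I) (h2 : f ∈ I) : f = 0 := by
  by_contra hf
  refine (mem_stdSpan_iff m I).mp h1 _ (leadExp_mem_support m hf) ?_
  exact Ideal.subset_span ⟨f, h2, hf, rfl⟩

lemma exists_dvd_of_monomial_mem_initialIdeal {a : Fin s →₀ ℕ}
    (h : monomial a (1 : K) ∈ initialIdeal m I) :
    ∃ g ∈ I, g ≠ 0 ∧ leadExp m g ≤ a := by
  have hset : { g | ∃ f ∈ I, f ≠ 0 ∧ g = leadMon m f } =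
      (fun e => monomial e (1 : K)) '' { e | ∃ f ∈ I, f ≠ 0 ∧ e = leadExp m f } := by
    ext g
    constructor
    · rintro ⟨f, hf, hf0, rfl⟩
      exact ⟨leadExp m f, ⟨f, hf, hf0, rfl⟩, rfl⟩
    · rintro ⟨e, ⟨f, hf, hf0, rfl⟩, rfl⟩
      exact ⟨f, hf, hf0, rfl⟩
  rw [initialIdeal, hset] at h
  obtain ⟨e, ⟨g, hg, hg0, rfl⟩, hle⟩ :=
    MvPolynomial.mem_ideal_span_monomial_image.mp h a
      (by simp [MvPolynomial.support_monomial])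
  exact ⟨g, hg, hg0, hle⟩

end StdAPI
section StdRep

variable {K : Type*} [Field K] {s : ℕ} (m : MonomialOrder (Fin s))
  (I : Ideal (MvPolynomial (Fin s) K))

lemma exists_std_rep_aux :
    ∀ (b : m.syn) (f : MvPolynomial (Fin s) K), m.toSyn (leadExp m f) ≤ b →
    ∃ g, g ∈ stdSpan m I ∧ f - g ∈ I ∧
      m.toSyn (leadExp m g) ≤ m.toSyn (leadExp m f) := by
  intro b
  induction b using WellFoundedLT.induction with
  | _ b ih =>
  intro f hfb
  by_cases hf0 : f = 0
  · exact ⟨0, Submodule.zero_mem _, by simp [hf0], by simp [hf0]⟩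
  set a := leadExp m f with ha_def
  have ha : a ∈ f.support := leadExp_mem_support m hf0
  have hca : f.coeff a ≠ 0 := MvPolynomial.mem_support_iff.mp ha
  by_cases hmem : monomial a (1 : K) ∈ initialIdeal m I
  · obtain ⟨g₀, hg₀I, hg₀0, hle⟩ := exists_dvd_of_monomial_mem_initialIdeal m I hmem
    set b₀ := leadExp m g₀ with hb₀
    set f' := f - monomial (a - b₀) (f.coeff a / leadCoeff m g₀) * g₀ with hf'
    have hsub : f - f' ∈ I := by
      have h : f - f' = monomial (a - b₀) (f.coeff a / leadCoeff m g₀) * g₀ := by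
        rw [hf']; ring
      rw [h]
      exact Ideal.mul_mem_left _ _ hg₀I
    have hcoeff : ∀ e, m.toSyn a ≤ m.toSyn e → f'.coeff e = 0 := by
      intro e he
      rcases eq_or_lt_of_le he with heq | hlt
      · have hea : e = a := m.toSyn.injective heq.symm
        subst hea
        rw [hf', MvPolynomial.coeff_sub, MvPolynomial.coeff_monomial_mul',
          if_pos tsub_le_self, tsub_tsub_cancel_of_le hle]
        have : g₀.coeff b₀ = leadCoeff m g₀ := rfl
        rw [this, div_mul_cancel₀ _ (leadCoeff_ne_zero m hg₀0), sub_self]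
      · have h1 : f.coeff e = 0 := coeff_eq_zero_of_leadExp_lt m hlt
        have h2 : (monomial (a - b₀) (f.coeff a / leadCoeff m g₀) * g₀).coeff e = 0 := by
          rw [MvPolynomial.coeff_monomial_mul']
          split_ifs with hdvd
          · rcases eq_or_ne (g₀.coeff (e - (a - b₀))) 0 with h0 | h0
            · rw [h0, mul_zero]
            · exfalso
              have hsyn : m.toSyn (e - (a - b₀)) ≤ m.toSyn b₀ :=
                le_leadExp m (MvPolynomial.mem_support_iff.mpr h0)
              have : m.toSyn e ≤ m.toSyn a := by
                calc m.toSyn e = m.toSyn ((e - (a - b₀)) + (a - b₀)) := by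
                      rw [tsub_add_cancel_of_le hdvd]
                  _ = m.toSyn (e - (a - b₀)) + m.toSyn (a - b₀) := map_add _ _ _
                  _ ≤ m.toSyn b₀ + m.toSyn (a - b₀) := add_le_add hsyn le_rfl
                  _ = m.toSyn (b₀ + (a - b₀)) := (map_add _ _ _).symm
                  _ = m.toSyn a := by rw [add_tsub_cancel_of_le hle]
              exact absurd this (not_le.mpr hlt)
          · rfl
        rw [hf', MvPolynomial.coeff_sub, h1, h2, sub_zero]
    by_cases hf'0 : f' = 0
    · refine ⟨0, Submodule.zero_mem _, ?_, leadExp_le m (by simp)⟩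
      rw [hf'0, sub_zero] at hsub
      simpa using hsub
    · have hlt : m.toSyn (leadExp m f') < m.toSyn a := by
        have hmem' := leadExp_mem_support m hf'0
        by_contra hc
        exact MvPolynomial.mem_support_iff.mp hmem' (hcoeff _ (not_lt.mp hc))
      obtain ⟨g, hg1, hg2, hg3⟩ := ih (m.toSyn (leadExp m f')) (lt_of_lt_of_le hlt hfb) f' le_rfl
      refine ⟨g, hg1, ?_, le_trans hg3 hlt.le⟩
      have : f - g = (f - f') + (f' - g) := by ring
      rw [this]
      exact Ideal.add_mem _ hsub hg2
  · set f' := f - monomial a (f.coeff a) with hf'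
    have hmono_std : monomial a (f.coeff a) ∈ stdSpan m I := by
      have h : monomial a (f.coeff a) = (f.coeff a) • monomial a (1 : K) := by
        rw [MvPolynomial.smul_monomial, smul_eq_mul, mul_one]
      rw [h]
      exact Submodule.smul_mem _ _ (Submodule.subset_span ⟨⟨a, rfl⟩, hmem⟩)
    have hcoeff : ∀ e, m.toSyn a ≤ m.toSyn e → f'.coeff e = 0 := by
      intro e he
      rcases eq_or_lt_of_le he with heq | hlt
      · have hea : e = a := m.toSyn.injective heq.symm
        subst hea
        simp [hf', MvPolynomial.coeff_monomial]
      · have h1 : f.coeff e = 0 := coeff_eq_zero_of_leadExp_lt m hlt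
        have hne : a ≠ e := fun h => by subst h; exact lt_irrefl _ hlt
        simp [hf', MvPolynomial.coeff_monomial, h1, hne]
    by_cases hf'0 : f' = 0
    · refine ⟨monomial a (f.coeff a), hmono_std, ?_, ?_⟩
      · have : f - monomial a (f.coeff a) = f' := hf'.symm
        rw [this, hf'0]
        exact Ideal.zero_mem _
      · apply leadExp_le
        intro e he
        have : e = a := by simpa using MvPolynomial.support_monomial_subset he
        rw [this]
    · have hlt : m.toSyn (leadExp m f') < m.toSyn a := by
        have hmem' := leadExp_mem_support m hf'0
        by_contra hc
        exact MvPolynomial.mem_support_iff.mp hmem' (hcoeff _ (not_lt.mp hc))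
      obtain ⟨g', hg1, hg2, hg3⟩ := ih (m.toSyn (leadExp m f')) (lt_of_lt_of_le hlt hfb) f' le_rfl
      refine ⟨g' + monomial a (f.coeff a), Submodule.add_mem _ hg1 hmono_std, ?_, ?_⟩
      · have : f - (g' + monomial a (f.coeff a)) = f' - g' := by rw [hf']; ring
        rw [this]
        exact hg2
      · apply leadExp_le
        intro e he
        rcases Finset.mem_union.mp (MvPolynomial.support_add he) with h' | h'
        · exact le_trans (le_leadExp m h') (le_trans hg3 hlt.le)
        · have : e = a := by simpa using MvPolynomial.support_monomial_subset h'
          rw [this]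

lemma exists_std_rep (hm : IsGradedOrder m) (f : MvPolynomial (Fin s) K) :
    ∃ g, g ∈ stdSpan m I ∧ f - g ∈ I ∧ g.totalDegree ≤ f.totalDegree := by
  obtain ⟨g, hg1, hg2, hg3⟩ := exists_std_rep_aux m I (m.toSyn (leadExp m f)) f le_rfl
  refine ⟨g, hg1, hg2, ?_⟩
  by_cases hg0 : g = 0
  · simp [hg0]
  by_cases hf0 : f = 0
  · subst hf0
    have h0 : leadExp m (0 : MvPolynomial (Fin s) K) = 0 := by
      simp [leadExp]
    have h1 : m.toSyn (leadExp m g) ≤ m.toSyn (0 : Fin s →₀ ℕ) := by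
      rw [← h0]; exact hg3
    have h2 : leadExp m g = 0 := by
      apply m.toSyn.injective
      apply le_antisymm _ (by simpa using (bot_le : (⊥ : m.syn) ≤ m.toSyn (leadExp m g)))
      simpa using h1
    rw [totalDegree_eq_degree_leadExp m hm hg0, h2]
    simp [Finsupp.degree]
  rw [totalDegree_eq_degree_leadExp m hm hg0, totalDegree_eq_degree_leadExp m hm hf0]
  exact degree_le_of_syn_le m hm hg3

end StdRep
section Indep

variable {K : Type*} [Field K] {s : ℕ} (m : MonomialOrder (Fin s))

lemma coeffs_zero_of_distinct_leads (F : Finset (MvPolynomial (Fin s) K)) :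
    (∀ f ∈ F, f ≠ 0) → (∀ f ∈ F, ∀ g ∈ F, leadExp m f = leadExp m g → f = g) →
    ∀ c : MvPolynomial (Fin s) K → K, (∑ f ∈ F, c f • f) = 0 → ∀ f ∈ F, c f = 0 := by
  classical
  induction F using Finset.strongInduction with
  | _ F ih =>
  intro h0 hd c hsum f hf
  obtain ⟨f₀, hf₀, hmax⟩ := F.exists_max_image (fun g => m.toSyn (leadExp m g)) ⟨f, hf⟩
  have hc0 : c f₀ = 0 := by
    have hco := congrArg (MvPolynomial.coeff (leadExp m f₀)) hsum
    rw [MvPolynomial.coeff_sum] at hco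
    rw [Finset.sum_eq_single f₀ ?h₀ (fun h => absurd hf₀ h)] at hco
    · rw [MvPolynomial.coeff_smul, smul_eq_mul] at hco
      have : MvPolynomial.coeff (leadExp m f₀) f₀ = leadCoeff m f₀ := rfl
      rw [this] at hco
      simpa using (mul_eq_zero.mp hco).resolve_right (leadCoeff_ne_zero m (h0 _ hf₀))
    case h₀ =>
      intro g hg hgne
      rw [MvPolynomial.coeff_smul]
      have hne : leadExp m g ≠ leadExp m f₀ := fun h => hgne (hd g hg f₀ hf₀ h)
      have hlt : m.toSyn (leadExp m g) < m.toSyn (leadExp m f₀) :=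
        lt_of_le_of_ne (hmax g hg) (fun h => hne (m.toSyn.injective h))
      rw [coeff_eq_zero_of_leadExp_lt m hlt, smul_zero]
  by_cases hff : f = f₀
  · rw [hff]; exact hc0
  · refine ih (F.erase f₀) (Finset.erase_ssubset hf₀)
      (fun g hg => h0 g (Finset.mem_of_mem_erase hg))
      (fun g hg h hh hgh => hd g (Finset.mem_of_mem_erase hg) h (Finset.mem_of_mem_erase hh) hgh)
      c ?_ f (Finset.mem_erase.mpr ⟨hff, hf⟩)
    have h := Finset.sum_erase_add F (fun g => c g • g) hf₀
    simp only [hc0, zero_smul, add_zero] at h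
    rw [h]; exact hsum

lemma linearIndependent_of_distinct_leads (F : Finset (MvPolynomial (Fin s) K))
    (h0 : ∀ f ∈ F, f ≠ 0) (hd : ∀ f ∈ F, ∀ g ∈ F, leadExp m f = leadExp m g → f = g) :
    LinearIndependent K ((↑) : ↥F → MvPolynomial (Fin s) K) := by
  classical
  rw [linearIndependent_iff']
  intro t g hsum i hit
  set c : MvPolynomial (Fin s) K → K :=
    fun x => if hx : x ∈ F then (if ⟨x, hx⟩ ∈ t then g ⟨x, hx⟩ else 0) else 0 with hc
  have key : (∑ f ∈ F, c f • f) = 0 := by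
    have h1 : (∑ f ∈ F, c f • f) = ∑ i ∈ F.attach, c ↑i • (↑i : MvPolynomial (Fin s) K) :=
      (Finset.sum_attach F (fun f => c f • f)).symm
    have h2 : ∑ i ∈ F.attach, c ↑i • (↑i : MvPolynomial (Fin s) K) =
        ∑ i ∈ t, c ↑i • (↑i : MvPolynomial (Fin s) K) :=
      (Finset.sum_subset (fun x _ => Finset.mem_attach _ x)
        (fun x _ hx => by simp [hc, hx, Subtype.coe_eta])).symm
    have h3 : ∑ i ∈ t, c ↑i • (↑i : MvPolynomial (Fin s) K) =
        ∑ i ∈ t, g i • (↑i : MvPolynomial (Fin s) K) := by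
      apply Finset.sum_congr rfl
      intro x hx
      simp [hc, hx, Subtype.coe_eta]
    rw [h1, h2, h3]; exact hsum
  have := coeffs_zero_of_distinct_leads m F h0 hd c key ↑i i.2
  simpa [hc, i.2, hit, Subtype.coe_eta] using this

lemma finrank_span_of_distinct_leads (F : Finset (MvPolynomial (Fin s) K))
    (h0 : ∀ f ∈ F, f ≠ 0) (hd : ∀ f ∈ F, ∀ g ∈ F, leadExp m f = leadExp m g → f = g) :
    Module.finrank K (Submodule.span K (↑F : Set (MvPolynomial (Fin s) K))) = F.card :=
  finrank_span_finset_eq_card (linearIndependent_of_distinct_leads m F h0 hd)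

end Indep

section FinrankMap

variable {K : Type*} [Field K] {M N : Type*} [AddCommGroup M] [Module K M]
  [AddCommGroup N] [Module K N]

lemma finrank_map_add_finrank_inf_ker (p : Submodule K M) [FiniteDimensional K p]
    (f : M →ₗ[K] N) :
    Module.finrank K (p.map f) + Module.finrank K (Submodule.comap p.subtype (LinearMap.ker f))
      = Module.finrank K p := by
  have h := LinearMap.finrank_range_add_finrank_ker (f.comp p.subtype)
  rwa [LinearMap.ker_comp, LinearMap.range_comp, Submodule.range_subtype] at h

lemma finrank_map_of_disjoint (p : Submodule K M) [FiniteDimensional K p]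
    (f : M →ₗ[K] N) (h : ∀ x ∈ p, f x = 0 → x = 0) :
    Module.finrank K (p.map f) = Module.finrank K p := by
  have h2 : Submodule.comap p.subtype (LinearMap.ker f) = ⊥ := by
    rw [Submodule.eq_bot_iff]
    rintro ⟨x, hx⟩ hmem
    have : f x = 0 := hmem
    exact Subtype.ext (h x hx this)
  have := finrank_map_add_finrank_inf_ker p f
  rw [h2, finrank_bot, add_zero] at this
  exact this

end FinrankMap
section Extraction

variable {K : Type*} [Field K] {s : ℕ} (m : MonomialOrder (Fin s))

/-- The coefficient-extraction linear map. -/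
noncomputable def coeffLM (a : Fin s →₀ ℕ) : MvPolynomial (Fin s) K →ₗ[K] K where
  toFun p := p.coeff a
  map_add' p q := MvPolynomial.coeff_add a p q
  map_smul' c p := MvPolynomial.coeff_smul a c p

lemma extraction : ∀ (r : ℕ) (V : Submodule K (MvPolynomial (Fin s) K)),
    FiniteDimensional K V → Module.finrank K V = r →
    ∃ F : Finset (MvPolynomial (Fin s) K), (↑F : Set (MvPolynomial (Fin s) K)) ⊆ V ∧
      F.card = r ∧ (∀ f ∈ F, f ≠ 0 ∧ leadCoeff m f = 1) ∧
      (∀ f ∈ F, ∀ g ∈ F, leadExp m f = leadExp m g → f = g) ∧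
      Submodule.span K (↑F : Set (MvPolynomial (Fin s) K)) = V := by
  intro r
  induction r with
  | zero =>
    intro V hfd hV
    refine ⟨∅, by simp, rfl, by simp, by simp, ?_⟩
    have : V = ⊥ := Submodule.finrank_eq_zero.mp hV
    simp [this]
  | succ n ih =>
    intro V hfd hV
    classical
    have hVne : V ≠ ⊥ := by
      intro h
      rw [h, finrank_bot] at hV
      exact Nat.succ_ne_zero n hV.symm
    obtain ⟨f, hfV, hf0⟩ := Submodule.exists_mem_ne_zero_of_ne_bot hVne
    set a := leadExp m f with ha
    set L : V →ₗ[K] K := (coeffLM a).comp V.subtype with hL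
    have hLf : L ⟨f, hfV⟩ = leadCoeff m f := rfl
    have hrange : LinearMap.range L = ⊤ := by
      have h1 : LinearMap.range L ≠ ⊥ := by
        intro h
        have h2 : L ⟨f, hfV⟩ = 0 := by
          have h3 := LinearMap.mem_range_self L ⟨f, hfV⟩
          rw [h] at h3
          exact (Submodule.mem_bot K).mp h3
        rw [hLf] at h2
        exact leadCoeff_ne_zero m hf0 h2
      have h2 : 0 < Module.finrank K (LinearMap.range L) :=
        Module.finrank_pos_iff.mpr (Submodule.nontrivial_iff_ne_bot.mpr h1)
      have h3 : Module.finrank K (LinearMap.range L) ≤ 1 := by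
        simpa using Submodule.finrank_le (LinearMap.range L)
      apply Submodule.eq_top_of_finrank_eq
      simpa using le_antisymm h3 h2
    have hker : Module.finrank K (LinearMap.ker L) = n := by
      have h4 := LinearMap.finrank_range_add_finrank_ker L
      rw [hrange, finrank_top, Module.finrank_self, hV] at h4
      omega
    set W : Submodule K (MvPolynomial (Fin s) K) := (LinearMap.ker L).map V.subtype with hW
    have hWV : W ≤ V := Submodule.map_subtype_le _ _
    have hWrank : Module.finrank K W = n := by
      rw [hW, Submodule.finrank_map_subtype_eq]
      exact hker
    have hWfd : FiniteDimensional K W := by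
      rw [hW]
      infer_instance
    have hWcoeff : ∀ g ∈ W, MvPolynomial.coeff a g = 0 := by
      intro g hg
      rw [hW, Submodule.mem_map] at hg
      obtain ⟨y, hy, rfl⟩ := hg
      exact (LinearMap.mem_ker (f := L)).mp hy
    obtain ⟨F', hF'sub, hF'card, hF'prop, hF'dist, hF'span⟩ := ih W hWfd hWrank
    set f₁ := (leadCoeff m f)⁻¹ • f with hf₁
    have hlcne : leadCoeff m f ≠ 0 := leadCoeff_ne_zero m hf0
    have hf₁0 : f₁ ≠ 0 := smul_ne_zero (inv_ne_zero hlcne) hf0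
    have hsupp : f₁.support = f.support :=
      MvPolynomial.support_smul_eq (inv_ne_zero hlcne) f
    have hlead₁ : leadExp m f₁ = a := by
      rw [leadExp, hsupp, ha]; rfl
    have hcoeffaf : MvPolynomial.coeff a f = leadCoeff m f := rfl
    have hlc₁ : leadCoeff m f₁ = 1 := by
      rw [leadCoeff, hlead₁, hf₁, MvPolynomial.coeff_smul, hcoeffaf, smul_eq_mul,
        inv_mul_cancel₀ hlcne]
    have hcoeff₁ : MvPolynomial.coeff a f₁ = 1 := by
      rw [← hlead₁]
      exact hlc₁
    have hf₁V : f₁ ∈ V := V.smul_mem _ hfV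
    have hf₁W : f₁ ∉ W := by
      intro h
      rw [hWcoeff f₁ h] at hcoeff₁
      exact zero_ne_one hcoeff₁
    have hnotmem : f₁ ∉ F' := fun h => hf₁W (hF'sub h)
    have hkey : ∀ g ∈ F', leadExp m g ≠ a := by
      intro g hg heq
      have h0 := (hF'prop g hg).1
      have hz := hWcoeff g (hF'sub hg)
      rw [← heq] at hz
      exact leadCoeff_ne_zero m h0 hz
    refine ⟨insert f₁ F', ?_, ?_, ?_, ?_, ?_⟩
    · rw [Finset.coe_insert]
      exact Set.insert_subset hf₁V (hF'sub.trans hWV)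
    · rw [Finset.card_insert_of_notMem hnotmem, hF'card]
    · intro g hg
      rcases Finset.mem_insert.mp hg with rfl | hg'
      · exact ⟨hf₁0, hlc₁⟩
      · exact hF'prop g hg'
    · intro g hg h hh heq
      rcases Finset.mem_insert.mp hg with rfl | hg' <;>
        rcases Finset.mem_insert.mp hh with rfl | hh'
      · rfl
      · exact absurd (heq.symm.trans hlead₁) (hkey h hh')
      · exact absurd (heq.trans hlead₁) (hkey g hg')
      · exact hF'dist g hg' h hh' heq
    · rw [Finset.coe_insert, Submodule.span_insert, hF'span]
      apply le_antisymm
      · exact sup_le ((Submodule.span_singleton_le_iff_mem _ _).mpr hf₁V) hWV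
      · intro g hgV
        have hmem : g - (MvPolynomial.coeff a g) • f₁ ∈ W := by
          rw [hW, Submodule.mem_map]
          refine ⟨⟨g - (MvPolynomial.coeff a g) • f₁,
            Submodule.sub_mem V hgV (Submodule.smul_mem V _ hf₁V)⟩, ?_, rfl⟩
          rw [LinearMap.mem_ker (f := L)]
          show MvPolynomial.coeff a (g - (MvPolynomial.coeff a g) • f₁) = 0
          rw [MvPolynomial.coeff_sub, MvPolynomial.coeff_smul, hcoeff₁, smul_eq_mul,
            mul_one, sub_self]
        have : g = (MvPolynomial.coeff a g) • f₁ + (g - (MvPolynomial.coeff a g) • f₁) := by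
          ring
        rw [this]
        exact Submodule.add_mem _
          (Submodule.mem_sup_left (Submodule.smul_mem _ _ (Submodule.mem_span_singleton_self f₁)))
          (Submodule.mem_sup_right hmem)

end Extraction
section AlgebraSide

variable {K : Type*} [Field K] [Fintype K] {s : ℕ}

/-- Evaluation at the points of `X`, as an algebra homomorphism. -/
noncomputable def evAlg (X : Finset (Fin s → K)) :
    MvPolynomial (Fin s) K →ₐ[K] (↥X → K) :=
  Pi.algHom K _ fun x => MvPolynomial.aeval (x : Fin s → K)

lemma evAlg_apply (X : Finset (Fin s → K)) (f : MvPolynomial (Fin s) K) (x : ↥X) :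
    evAlg X f x = eval (x : Fin s → K) f := by
  show MvPolynomial.aeval (x : Fin s → K) f = eval (x : Fin s → K) f
  rw [MvPolynomial.aeval_def, Algebra.algebraMap_self]
  rfl

lemma evAlg_eq_evalMap (X : Finset (Fin s → K)) (f : MvPolynomial (Fin s) K) :
    evAlg X f = evalMap X f := by
  funext x
  rw [evAlg_apply]
  rfl

lemma evAlg_surjective (X : Finset (Fin s → K)) : Function.Surjective (evAlg X) := by
  intro w
  classical
  set W : (Fin s → K) → K := fun y => if h : y ∈ X then w ⟨y, h⟩ else 0 with hW
  have := MvPolynomial.map_restrict_dom_evalₗ K (Fin s)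
  have hmem : W ∈ (MvPolynomial.restrictDegree (Fin s) K (Fintype.card K - 1)).map
      (MvPolynomial.evalₗ K (Fin s)) := by
    rw [this]; trivial
  obtain ⟨f, _, hf⟩ := Submodule.mem_map.mp hmem
  refine ⟨f, ?_⟩
  funext x
  rw [evAlg_apply]
  have : MvPolynomial.evalₗ K (Fin s) f (x : Fin s → K) = W (x : Fin s → K) := by rw [hf]
  rw [MvPolynomial.evalₗ_apply] at this
  rw [this, hW]
  simp [x.2]

lemma ker_evAlg (X : Finset (Fin s → K)) :
    RingHom.ker (evAlg X) = affVanishingIdeal (X : Set (Fin s → K)) := by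
  ext f
  constructor
  · intro hf x hx
    have : evAlg X f = 0 := hf
    have := congrFun this ⟨x, hx⟩
    rwa [evAlg_apply] at this
  · intro hf
    have : evAlg X f = 0 := by
      funext x
      rw [evAlg_apply]
      exact hf x x.2
    exact this

lemma adeg_affVanishingIdeal (X : Finset (Fin s → K)) :
    adeg (affVanishingIdeal (X : Set (Fin s → K))) = X.card := by
  rw [adeg, ← ker_evAlg X]
  have e := Ideal.quotientKerAlgEquivOfSurjective (evAlg_surjective X)
  rw [e.toLinearEquiv.finrank_eq]
  rw [Module.finrank_pi K]
  exact Fintype.card_coe X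

end AlgebraSide
section ProductIdeal

variable {K : Type*} [Field K] {ι : Type*} [Fintype ι]

/-- Restriction to a subset, as an algebra homomorphism. -/
noncomputable def restrAlg (Z : Set ι) : (ι → K) →ₐ[K] (↥Z → K) :=
  Pi.algHom K _ fun z => Pi.evalAlgHom K _ (z : ι)

lemma restrAlg_apply (Z : Set ι) (w : ι → K) (z : ↥Z) : restrAlg Z w z = w ↑z := rfl

lemma restrAlg_surjective (Z : Set ι) : Function.Surjective (restrAlg (K := K) Z) := by
  intro u
  classical
  refine ⟨fun i => if h : i ∈ Z then u ⟨i, h⟩ else 0, ?_⟩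
  funext z
  rw [restrAlg_apply]
  simp [z.2]

lemma ker_restrAlg_eq_span (V : Set (ι → K)) :
    RingHom.ker (restrAlg (K := K) {i | ∀ v ∈ V, v i = 0}) = Ideal.span V := by
  classical
  set Z : Set ι := {i | ∀ v ∈ V, v i = 0} with hZ
  apply le_antisymm
  · intro w hw
    have hwz : ∀ i ∈ Z, w i = 0 := by
      intro i hi
      have : restrAlg (K := K) Z w = 0 := hw
      exact congrFun this ⟨i, hi⟩
    have hrepr : w = ∑ i : ι, w i • fun j => if i = j then (1 : K) else 0 :=
      pi_eq_sum_univ w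
    rw [hrepr]
    apply Submodule.sum_mem
    intro i _
    rcases eq_or_ne (w i) 0 with h0 | h0
    · rw [h0, zero_smul]
      exact Submodule.zero_mem _
    · have hiZ : i ∉ Z := fun h => h0 (hwz i h)
      have hiZ' : ¬ (∀ v ∈ V, v i = 0) := hiZ
      push_neg at hiZ'
      obtain ⟨v, hvV, hvi⟩ := hiZ'
      have hdelta : (fun j => if i = j then (1 : K) else 0) =
          (v i)⁻¹ • ((fun j => if i = j then (1 : K) else 0) * v) := by
        funext j
        rcases eq_or_ne i j with rfl | hij
        · simp [inv_mul_cancel₀ hvi]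
        · simp [hij]
      rw [hdelta]
      exact Submodule.smul_mem _ _ (Submodule.smul_mem _ _
        (Ideal.mul_mem_left _ _ (Ideal.subset_span hvV)))
  · rw [Ideal.span_le]
    intro v hv
    have : restrAlg (K := K) Z v = 0 := by
      funext z
      rw [restrAlg_apply]
      exact z.2 v hv
    exact this

lemma finrank_quotient_span_vectors (V : Set (ι → K)) :
    Module.finrank K ((ι → K) ⧸ Ideal.span V) =
      Nat.card {i | ∀ v ∈ V, v i = 0} := by
  rw [← ker_restrAlg_eq_span V]
  have e := Ideal.quotientKerAlgEquivOfSurjective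
    (restrAlg_surjective (K := K) {i | ∀ v ∈ V, v i = 0})
  rw [e.toLinearEquiv.finrank_eq]
  haveI := Fintype.ofFinite ↥{i | ∀ v ∈ V, v i = 0}
  rw [Module.finrank_pi K, Nat.card_eq_fintype_card]

end ProductIdeal
section Bridge

variable {K : Type*} [Field K] [Fintype K] {s : ℕ}

lemma adeg_sup_span (X : Finset (Fin s → K)) (F : Set (MvPolynomial (Fin s) K)) :
    adeg (affVanishingIdeal (X : Set (Fin s → K)) ⊔ Ideal.span F) =
      Nat.card {x : ↥X | ∀ f ∈ F, eval (x : Fin s → K) f = 0} := by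
  classical
  set J : Ideal (↥X → K) := Ideal.span (⇑(evAlg X) '' F) with hJ
  set ψ : MvPolynomial (Fin s) K →ₐ[K] ((↥X → K) ⧸ J) :=
    (Ideal.Quotient.mkₐ K J).comp (evAlg X) with hψ
  have hsurj : Function.Surjective ψ := by
    rw [hψ]
    exact (Ideal.Quotient.mkₐ_surjective K J).comp (evAlg_surjective X)
  have hkermk : ∀ g : MvPolynomial (Fin s) K, (ψ g = 0 ↔ evAlg X g ∈ J) := by
    intro g
    show Ideal.Quotient.mkₐ K J (evAlg X g) = 0 ↔ _
    rw [Ideal.Quotient.mkₐ_eq_mk]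
    exact Ideal.Quotient.eq_zero_iff_mem
  have hker : RingHom.ker ψ = affVanishingIdeal (X : Set (Fin s → K)) ⊔ Ideal.span F := by
    have h2 : J = Ideal.map (evAlg X) (Ideal.span F) := by rw [hJ, Ideal.map_span]
    have h3 : RingHom.ker ψ = Ideal.comap (evAlg X) J := by
      ext g
      rw [RingHom.mem_ker, Ideal.mem_comap]
      exact hkermk g
    rw [h3, h2, Ideal.comap_map_of_surjective _ (evAlg_surjective X), ← RingHom.ker_eq_comap_bot,
      ker_evAlg, sup_comm]
  rw [adeg, ← hker]
  have e := Ideal.quotientKerAlgEquivOfSurjective hsurj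
  rw [e.toLinearEquiv.finrank_eq, hJ, finrank_quotient_span_vectors]
  have hseteq : {x : ↥X | ∀ v ∈ ⇑(evAlg X) '' F, v x = 0} =
      {x : ↥X | ∀ f ∈ F, eval (x : Fin s → K) f = 0} := by
    ext x
    simp only [Set.mem_setOf_eq, Set.forall_mem_image]
    constructor
    · intro h f hf
      have := h hf
      rwa [evAlg_apply] at this
    · intro h v hv
      rw [evAlg_apply]
      exact h v hv
  rw [hseteq]

lemma evalMap_apply (X : Finset (Fin s → K)) (f : MvPolynomial (Fin s) K) (x : ↥X) :
    evalMap X f x = eval (x : Fin s → K) f := rfl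

lemma codeSupport_span_eval (X : Finset (Fin s → K)) (F : Finset (MvPolynomial (Fin s) K)) :
    codeSupport (Submodule.span K (⇑(evalMap X) '' (↑F : Set (MvPolynomial (Fin s) K)))) =
      {x : ↥X | ∀ f ∈ (↑F : Set (MvPolynomial (Fin s) K)), eval (x : Fin s → K) f = 0}ᶜ := by
  rw [codeSupport_span]
  ext x
  simp only [Set.mem_iUnion, Set.mem_setOf_eq, Set.mem_compl_iff, Set.forall_mem_image,
    not_forall]
  constructor
  · rintro ⟨v, ⟨f, hf, rfl⟩, hvx⟩
    exact ⟨f, hf, hvx⟩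
  · rintro ⟨f, hf, hvx⟩
    exact ⟨evalMap X f, ⟨f, hf, rfl⟩, hvx⟩

lemma count_lemma (X : Finset (Fin s → K)) (F : Finset (MvPolynomial (Fin s) K)) :
    adeg (affVanishingIdeal (X : Set (Fin s → K)) ⊔
        Ideal.span (↑F : Set (MvPolynomial (Fin s) K))) +
      (codeSupport (Submodule.span K
        (⇑(evalMap X) '' (↑F : Set (MvPolynomial (Fin s) K))))).ncard = X.card := by
  classical
  rw [adeg_sup_span, codeSupport_span_eval]
  have h1 : Nat.card {x : ↥X | ∀ f ∈ (↑F : Set (MvPolynomial (Fin s) K)),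
        eval (x : Fin s → K) f = 0} =
      ({x : ↥X | ∀ f ∈ (↑F : Set (MvPolynomial (Fin s) K)),
        eval (x : Fin s → K) f = 0} : Set ↥X).ncard :=
    (Nat.card_coe_set_eq _)
  have h2 := Set.ncard_add_ncard_compl (α := ↥X)
    {x : ↥X | ∀ f ∈ (↑F : Set (MvPolynomial (Fin s) K)), eval (x : Fin s → K) f = 0}
  rw [Nat.card_eq_fintype_card, Fintype.card_coe] at h2
  rw [h1]
  exact h2

end Bridge
section CodeRank

variable {K : Type*} [Field K] [Fintype K] {s : ℕ}

lemma ker_evalMap (X : Finset (Fin s → K)) :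
    LinearMap.ker (evalMap X) =
      Submodule.restrictScalars K (affVanishingIdeal (X : Set (Fin s → K))) := by
  ext f
  constructor
  · intro hf x hx
    have h : evalMap X f = 0 := hf
    exact congrFun h ⟨x, hx⟩
  · intro hf
    show evalMap X f = 0
    funext x
    exact hf ↑x x.2

lemma finrank_code (X : Finset (Fin s → K)) (d : ℕ) :
    Module.finrank K ((restrictTotalDegree (Fin s) K d).map (evalMap X)) =
      affineHilbert (affVanishingIdeal (X : Set (Fin s → K))) d := by
  rw [affineHilbert]
  have h1 := finrank_map_add_finrank_inf_ker (restrictTotalDegree (Fin s) K d) (evalMap X)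
  have h2 := finrank_map_add_finrank_inf_ker (restrictTotalDegree (Fin s) K d)
    (Submodule.restrictScalars K (affVanishingIdeal (X : Set (Fin s → K)))).mkQ
  rw [Submodule.ker_mkQ] at h2
  rw [ker_evalMap] at h1
  omega

lemma exists_subcode {ι : Type*} [Fintype ι] (C : Submodule K (ι → K)) (r : ℕ)
    (hr : r ≤ Module.finrank K C) :
    ∃ D : Submodule K (ι → K), D ≤ C ∧ Module.finrank K D = r := by
  set b := Module.finBasis K C with hb
  set v : Fin r → (ι → K) := fun i => ↑(b (Fin.castLE hr i)) with hv
  have hind : LinearIndependent K v :=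
    ((b.linearIndependent.map' C.subtype (Submodule.ker_subtype C)).comp
      (Fin.castLE hr) (Fin.castLE_injective hr))
  refine ⟨Submodule.span K (Set.range v), ?_, ?_⟩
  · rw [Submodule.span_le]
    rintro _ ⟨i, rfl⟩
    exact (b (Fin.castLE hr i)).2
  · rw [finrank_span_eq_card hind, Fintype.card_fin]

end CodeRank
section Main

variable {K : Type*} [Field K] [Fintype K] {s : ℕ}

theorem ghw_reed_muller_type_code' (X : Finset (Fin s → K))
    (m : MonomialOrder (Fin s)) (hm : IsGradedOrder m) (d r : ℕ)
    (hr1 : 1 ≤ r) (hr2 : r ≤ affineHilbert (affVanishingIdeal (X : Set (Fin s → K))) d) :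
    ghw ((restrictTotalDegree (Fin s) K d).map (evalMap X)) r =
      adeg (affVanishingIdeal (X : Set (Fin s → K))) -
        sSup { n | ∃ F ∈ FprecSet m (affVanishingIdeal (X : Set (Fin s → K))) d r,
          n = adeg (affVanishingIdeal (X : Set (Fin s → K)) ⊔
                Ideal.span (F : Set (MvPolynomial (Fin s) K))) } := by
  classical
  set I := affVanishingIdeal (X : Set (Fin s → K)) with hI
  set C := (restrictTotalDegree (Fin s) K d).map (evalMap X) with hC
  set N := adeg I with hN
  have hNcard : N = X.card := adeg_affVanishingIdeal X
  -- from a family F to a subcode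
  have key1 : ∀ F ∈ FprecSet m I d r,
      ∃ D : Submodule K (↥X → K), D ≤ C ∧ Module.finrank K D = r ∧
        adeg (I ⊔ Ideal.span (F : Set (MvPolynomial (Fin s) K))) + (codeSupport D).ncard = N := by
    rintro F ⟨hcard, hprop, hdist⟩
    refine ⟨Submodule.span K (⇑(evalMap X) '' (↑F : Set (MvPolynomial (Fin s) K))), ?_, ?_, ?_⟩
    · rw [Submodule.span_le]
      rintro _ ⟨f, hf, rfl⟩
      exact ⟨f, (mem_restrictTotalDegree _ _ _).mpr (hprop f hf).2.2.2, rfl⟩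
    · rw [← Submodule.map_span]
      haveI : FiniteDimensional K (Submodule.span K (↑F : Set (MvPolynomial (Fin s) K))) :=
        FiniteDimensional.span_of_finite K F.finite_toSet
      have hstd : Submodule.span K (↑F : Set (MvPolynomial (Fin s) K)) ≤ stdSpan m I :=
        Submodule.span_le.mpr (fun f hf => (hprop f hf).1)
      rw [finrank_map_of_disjoint _ _ ?hz]
      · rw [finrank_span_of_distinct_leads m F (fun f hf => (hprop f hf).2.1) hdist]
        exact hcard
      case hz =>
        intro x hx hx0
        apply eq_zero_of_mem_stdSpan_inter m I (hstd hx)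
        have : x ∈ LinearMap.ker (evalMap X) := hx0
        rw [ker_evalMap] at this
        exact this
    · rw [hNcard]
      exact count_lemma X F
  -- from a subcode to a family F
  have key2 : ∀ D : Submodule K (↥X → K), D ≤ C → Module.finrank K D = r →
      ∃ F ∈ FprecSet m I d r,
        adeg (I ⊔ Ideal.span (F : Set (MvPolynomial (Fin s) K))) + (codeSupport D).ncard = N := by
    intro D hDC hDr
    set Q := (stdSpan m I ⊓ restrictTotalDegree (Fin s) K d) ⊓
      Submodule.comap (evalMap X) D with hQ
    have hQstd : Q ≤ stdSpan m I := le_trans inf_le_left inf_le_left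
    have hQdeg : Q ≤ restrictTotalDegree (Fin s) K d := le_trans inf_le_left inf_le_right
    haveI hQfd : FiniteDimensional K Q := Submodule.finiteDimensional_of_le hQdeg
    have hdisj : ∀ x ∈ Q, evalMap X x = 0 → x = 0 := by
      intro x hx hx0
      apply eq_zero_of_mem_stdSpan_inter m I (hQstd hx)
      have : x ∈ LinearMap.ker (evalMap X) := hx0
      rw [ker_evalMap] at this
      exact this
    have hmapQ : Submodule.map (evalMap X) Q = D := by
      apply le_antisymm
      · rintro _ ⟨g, hg, rfl⟩
        exact hg.2
      · intro y hyD
        obtain ⟨f, hf, rfl⟩ := hDC hyD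
        obtain ⟨g, hg1, hg2, hg3⟩ := exists_std_rep m I hm f
        have hev : evalMap X g = evalMap X f := by
          have h0 : f - g ∈ LinearMap.ker (evalMap X) := by
            rw [ker_evalMap]
            exact hg2
          have h1 : evalMap X (f - g) = 0 := h0
          rw [map_sub] at h1
          have := sub_eq_zero.mp h1
          rw [this]
        refine ⟨g, ⟨⟨hg1, ?_⟩, ?_⟩, hev⟩
        · exact (mem_restrictTotalDegree _ _ _).mpr
            (le_trans hg3 ((mem_restrictTotalDegree _ _ _).mp hf))
        · show evalMap X g ∈ D
          rw [hev]
          exact hyD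
    have hQr : Module.finrank K Q = r := by
      rw [← hDr, ← hmapQ]
      exact (finrank_map_of_disjoint Q (evalMap X) hdisj).symm
    obtain ⟨F, hFsub, hFcard, hFprop, hFdist, hFspan⟩ := extraction m r Q hQfd hQr
    have hFmem : F ∈ FprecSet m I d r := by
      refine ⟨hFcard, fun f hf => ⟨hQstd (hFsub hf), (hFprop f hf).1, (hFprop f hf).2, ?_⟩, hFdist⟩
      exact (mem_restrictTotalDegree _ _ _).mp (hQdeg (hFsub hf))
    refine ⟨F, hFmem, ?_⟩
    have hDspan : Submodule.span K (⇑(evalMap X) '' (↑F : Set (MvPolynomial (Fin s) K))) = D := by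
      rw [← Submodule.map_span, hFspan, hmapQ]
    rw [hNcard, ← hDspan]
    exact count_lemma X F
  -- the two optimization sets
  set B := { n | ∃ F ∈ FprecSet m I d r,
      n = adeg (I ⊔ Ideal.span (F : Set (MvPolynomial (Fin s) K))) } with hB
  set A := { n | ∃ D : Submodule K (↥X → K),
      D ≤ C ∧ Module.finrank K ↥D = r ∧ (codeSupport D).ncard = n } with hA
  have hAB : ∀ a ∈ A, ∃ b ∈ B, b + a = N := by
    rintro a ⟨D, hDC, hDr, rfl⟩
    obtain ⟨F, hF, hcount⟩ := key2 D hDC hDr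
    exact ⟨_, ⟨F, hF, rfl⟩, hcount⟩
  have hBA : ∀ b ∈ B, ∃ a ∈ A, b + a = N := by
    rintro b ⟨F, hF, rfl⟩
    obtain ⟨D, hDC, hDr, hcount⟩ := key1 F hF
    exact ⟨_, ⟨D, hDC, hDr, rfl⟩, hcount⟩
  have hAne : A.Nonempty := by
    obtain ⟨D₀, hD₀C, hD₀r⟩ := exists_subcode C r (by rw [hC, finrank_code]; exact hr2)
    exact ⟨_, D₀, hD₀C, hD₀r, rfl⟩
  have hBne : B.Nonempty := by
    obtain ⟨a, haA⟩ := hAne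
    obtain ⟨b, hbB, _⟩ := hAB a haA
    exact ⟨b, hbB⟩
  have hBbdd : BddAbove B := by
    refine ⟨N, fun b hb => ?_⟩
    obtain ⟨a, _, hab⟩ := hBA b hb
    omega
  have hsupB : sSup B ∈ B := Nat.sSup_mem hBne hBbdd
  show sInf A = N - sSup B
  apply le_antisymm
  · obtain ⟨a₁, ha₁A, ha₁⟩ := hBA _ hsupB
    have : a₁ = N - sSup B := by omega
    rw [← this]
    exact Nat.sInf_le ha₁A
  · have hinf : sInf A ∈ A := Nat.sInf_mem hAne
    obtain ⟨b₁, hb₁B, hb₁⟩ := hAB _ hinf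
    have hble : b₁ ≤ sSup B := le_csSup hBbdd hb₁B
    omega

end Main

/-- Corollary (degree formula for the generalized Hamming weights of the
Reed–Muller-type code `C_X(d)`). -/
theorem ghw_reed_muller_type_code [Fintype K] (X : Finset (Fin s → K))
    (m : MonomialOrder (Fin s)) (hm : IsGradedOrder m) (d r : ℕ)
    (hr1 : 1 ≤ r) (hr2 : r ≤ affineHilbert (affVanishingIdeal (X : Set (Fin s → K))) d) :
    ghw ((restrictTotalDegree (Fin s) K d).map (evalMap X)) r =
      adeg (affVanishingIdeal (X : Set (Fin s → K))) -
        sSup { n | ∃ F ∈ FprecSet m (affVanishingIdeal (X : Set (Fin s → K))) d r,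
          n = adeg (affVanishingIdeal (X : Set (Fin s → K)) ⊔
                Ideal.span (F : Set (MvPolynomial (Fin s) K))) } := by
  exact ghw_reed_muller_type_code' X m hm d r hr1 hr2
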